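/- arXiv:1412.8481 — 2 statements merged into one kernel-verified Lean document; each statement's English description precedes it below -/
import Mathlib

section
/- Let p ∈ (0, ∞), let (Ω, μ) be a measure space, and let B ⊂ L_p(Ω, μ) be a two-valued set. Then B, with the metric inherited from L_p(Ω, μ), has strict p-negative type if and only if B is an affinely independent subset of L_p(Ω, μ) when L_p(Ω, μ) is considered as a real vector space. -/
open MeasureTheory ENNReal Filter
open scoped Classical

/-- A set `B` in `X`, equipped with the distance function `d`, has `p`-negative type:
for all finite collections of distinct points of `B` and real weights summing to zero,
`∑_{j,i} d(z_j, z_i)^p ζ_j ζ_i ≤ 0`. -/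
def HasNegativeType {X : Type*} (d : X → X → ℝ) (p : ℝ) (B : Set X) : Prop :=
  ∀ n : ℕ, 2 ≤ n → ∀ z : Fin n → X, Function.Injective z → (∀ k, z k ∈ B) →
    ∀ ζ : Fin n → ℝ, ∑ k, ζ k = 0 →
      ∑ j, ∑ i, d (z j) (z i) ^ p * (ζ j * ζ i) ≤ 0

/-- Strict `p`-negative type: `p`-negative type, with strict inequality whenever the
weight tuple `ζ` is nonzero. -/
def HasStrictNegativeType {X : Type*} (d : X → X → ℝ) (p : ℝ) (B : Set X) : Prop :=
  HasNegativeType d p B ∧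
    ∀ n : ℕ, 2 ≤ n → ∀ z : Fin n → X, Function.Injective z → (∀ k, z k ∈ B) →
      ∀ ζ : Fin n → ℝ, ∑ k, ζ k = 0 → ζ ≠ 0 →
        ∑ j, ∑ i, d (z j) (z i) ^ p * (ζ j * ζ i) < 0

/-- The `p`-simplex gap `γ_p(D)` of a signed `(s,t)`-simplex
`D = [x_j(m_j); y_i(n_i)]_{s,t}` with respect to the distance function `d`. -/
noncomputable def simplexGap {X : Type*} (d : X → X → ℝ) (p : ℝ) {s t : ℕ}
    (x : Fin s → X) (y : Fin t → X) (m : Fin s → ℝ) (n : Fin t → ℝ) : ℝ :=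
  (∑ j, ∑ i, m j * n i * d (x j) (y i) ^ p)
    - (∑ j₁, ∑ j₂, if j₁ < j₂ then m j₁ * m j₂ * d (x j₁) (x j₂) ^ p else 0)
    - (∑ i₁, ∑ i₂, if i₁ < i₂ then n i₁ * n i₂ * d (y i₁) (y i₂) ^ p else 0)

/-- A signed simplex is degenerate if for every point `z`, the repeating numbers
`m(z) = ∑_{j : x_j = z} m_j` and `n(z) = ∑_{i : y_i = z} n_i` coincide. -/
def SimplexDegenerate {X : Type*} {s t : ℕ}
    (x : Fin s → X) (y : Fin t → X) (m : Fin s → ℝ) (n : Fin t → ℝ) : Prop :=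
  ∀ z : X, (∑ j, if x j = z then m j else 0) = (∑ i, if y i = z then n i else 0)


/-- The distance on `L_p(Ω, μ)` induced by the `p`-(quasi-)norm:
`d(f, g) = ‖f − g‖_p = (∫ |f − g|^p dμ)^{1/p}`. -/
noncomputable def lpDist {Ω : Type*} [MeasurableSpace Ω] (p : ℝ) (μ : Measure Ω) (f g : Ω →ₘ[μ] ℝ) : ℝ :=
  (eLpNorm (⇑(f - g)) (ENNReal.ofReal p) μ).toReal

/-- A set of (a.e.-classes of) measurable functions is two-valued if it has more than one
element and the essential range of each member is a subset of `{0, 1}`. -/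
def TwoValued {Ω : Type*} [MeasurableSpace Ω] {μ : Measure Ω} (B : Set (Ω →ₘ[μ] ℝ)) : Prop :=
  B.Nontrivial ∧ ∀ f ∈ B, ∀ᵐ ω ∂μ, (f : Ω → ℝ) ω ∈ ({0, 1} : Set ℝ)

section aux
variable {Ω : Type*} [MeasurableSpace Ω] {μ : Measure Ω} {p : ℝ}

lemma sum_identity {n : ℕ} (ζ a : Fin n → ℝ) (h : ∑ k, ζ k = 0) :
    ∑ j, ∑ i, (a j - a i) ^ 2 * (ζ j * ζ i) = -2 * (∑ k, ζ k * a k) ^ 2 := by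
  have e : ∀ j i : Fin n, (a j - a i) ^ 2 * (ζ j * ζ i)
      = (ζ j * a j ^ 2) * ζ i + ζ j * (ζ i * a i ^ 2) - (2 * (ζ j * a j)) * (ζ i * a i) := by
    intro j i; ring
  simp_rw [e, Finset.sum_sub_distrib, Finset.sum_add_distrib, ← Finset.mul_sum, ← Finset.sum_mul, h]
  simp [Finset.mul_sum, Finset.sum_mul, Finset.sum_sub_distrib, sq]
  exact Finset.sum_congr rfl fun j _ => Finset.sum_congr rfl fun i _ => by ring

lemma ptwise (hp : 0 < p) {x y : ℝ} (hx : x ∈ ({0, 1} : Set ℝ)) (hy : y ∈ ({0, 1} : Set ℝ)) :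
    ‖x - y‖ ^ p = (x - y) ^ 2 := by
  rcases hx with rfl | rfl <;> rcases hy with rfl | rfl <;>
    norm_num [Real.zero_rpow hp.ne', Real.one_rpow]

lemma memLp_sub (hp : 0 < p) {f g : Ω →ₘ[μ] ℝ}
    (hf : MemLp (⇑f) (ENNReal.ofReal p) μ) (hg : MemLp (⇑g) (ENNReal.ofReal p) μ) :
    MemLp (⇑(f - g)) (ENNReal.ofReal p) μ :=
  (hf.sub hg).ae_eq (AEEqFun.coeFn_sub f g).symm

lemma dist_pow (hp : 0 < p) {f g : Ω →ₘ[μ] ℝ}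
    (hf2 : ∀ᵐ ω ∂μ, (f : Ω → ℝ) ω ∈ ({0, 1} : Set ℝ))
    (hg2 : ∀ᵐ ω ∂μ, (g : Ω → ℝ) ω ∈ ({0, 1} : Set ℝ))
    (hf : MemLp (⇑f) (ENNReal.ofReal p) μ) (hg : MemLp (⇑g) (ENNReal.ofReal p) μ) :
    lpDist p μ f g ^ p = ∫ ω, (f ω - g ω) ^ 2 ∂μ := by
  have hq0 : (ENNReal.ofReal p) ≠ 0 := by simp [ENNReal.ofReal_eq_zero, not_le, hp]
  have hqt : (ENNReal.ofReal p) ≠ ∞ := ENNReal.ofReal_ne_top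
  have hqr : (ENNReal.ofReal p).toReal = p := ENNReal.toReal_ofReal hp.le
  have hsub := memLp_sub hp hf hg
  have hcongr : (fun ω => ‖(f - g) ω‖ ^ p) =ᵐ[μ] fun ω => (f ω - g ω) ^ 2 := by
    filter_upwards [hf2, hg2, AEEqFun.coeFn_sub f g] with ω h1 h2 h3
    rw [h3]; exact ptwise hp h1 h2
  have hI : (0:ℝ) ≤ ∫ ω, ‖(f - g) ω‖ ^ (ENNReal.ofReal p).toReal ∂μ :=
    integral_nonneg fun ω => Real.rpow_nonneg (norm_nonneg _) _
  rw [hqr] at hI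
  rw [lpDist, hsub.eLpNorm_eq_integral_rpow_norm hq0 hqt, hqr,
    ENNReal.toReal_ofReal (Real.rpow_nonneg hI _), ← Real.rpow_mul hI,
    inv_mul_cancel₀ hp.ne', Real.rpow_one]
  exact integral_congr_ae hcongr

lemma integrable_sq (hp : 0 < p) {f g : Ω →ₘ[μ] ℝ}
    (hf2 : ∀ᵐ ω ∂μ, (f : Ω → ℝ) ω ∈ ({0, 1} : Set ℝ))
    (hg2 : ∀ᵐ ω ∂μ, (g : Ω → ℝ) ω ∈ ({0, 1} : Set ℝ))
    (hf : MemLp (⇑f) (ENNReal.ofReal p) μ) (hg : MemLp (⇑g) (ENNReal.ofReal p) μ) :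
    Integrable (fun ω => (f ω - g ω) ^ 2) μ := by
  have hq0 : (ENNReal.ofReal p) ≠ 0 := by simp [ENNReal.ofReal_eq_zero, not_le, hp]
  have hsub := memLp_sub hp hf hg
  refine (hsub.integrable_norm_rpow hq0 ENNReal.ofReal_ne_top).congr ?_
  filter_upwards [hf2, hg2, AEEqFun.coeFn_sub f g] with ω h1 h2 h3
  rw [ENNReal.toReal_ofReal hp.le, h3]; exact ptwise hp h1 h2

lemma coeFn_finset_sum {ι : Type*} (s : Finset ι) (F : ι → (Ω →ₘ[μ] ℝ)) :
    ⇑(∑ k ∈ s, F k) =ᵐ[μ] fun ω => ∑ k ∈ s, (F k) ω := by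
  classical
  induction s using Finset.induction_on with
  | empty => simpa [Pi.zero_def] using (AEEqFun.coeFn_zero (β := ℝ) (μ := μ))
  | @insert a s ha ih =>
    rw [Finset.sum_insert ha]
    filter_upwards [AEEqFun.coeFn_add (F a) (∑ k ∈ s, F k), ih] with ω h1 h2
    simp [Finset.sum_insert ha, h1, h2]

lemma coe_sum_smul {n : ℕ} (z : Fin n → (Ω →ₘ[μ] ℝ)) (ζ : Fin n → ℝ) :
    ⇑(∑ k, ζ k • z k) =ᵐ[μ] fun ω => ∑ k, ζ k * (z k) ω := by
  have h2 : ∀ᵐ ω ∂μ, ∀ k : Fin n, (ζ k • z k) ω = ζ k * (z k) ω :=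
    ae_all_iff.2 fun k => AEEqFun.coeFn_smul (ζ k) (z k)
  filter_upwards [coeFn_finset_sum Finset.univ (fun k => ζ k • z k), h2] with ω h1 h2
  rw [h1]; exact Finset.sum_congr rfl fun k _ => h2 k

section key
variable {B : Set (Ω →ₘ[μ] ℝ)}
  (hB2 : ∀ f ∈ B, ∀ᵐ ω ∂μ, (f : Ω → ℝ) ω ∈ ({0, 1} : Set ℝ))
  (hBLp : ∀ f ∈ B, MemLp (⇑f) (ENNReal.ofReal p) μ)

include hB2 hBLp in
lemma key' (hp : 0 < p) {n : ℕ} (z : Fin n → (Ω →ₘ[μ] ℝ)) (hz : ∀ k, z k ∈ B)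
    (ζ : Fin n → ℝ) (hζ : ∑ k, ζ k = 0) :
    ∑ j, ∑ i, lpDist p μ (z j) (z i) ^ p * (ζ j * ζ i)
      = -2 * ∫ ω, (∑ k, ζ k * (z k) ω) ^ 2 ∂μ := by
  have hint : ∀ j i : Fin n, Integrable (fun ω => ((z j) ω - (z i) ω) ^ 2) μ := fun j i =>
    integrable_sq hp (hB2 _ (hz j)) (hB2 _ (hz i)) (hBLp _ (hz j)) (hBLp _ (hz i))
  calc ∑ j, ∑ i, lpDist p μ (z j) (z i) ^ p * (ζ j * ζ i)
      = ∑ j, ∑ i, (∫ ω, ((z j) ω - (z i) ω) ^ 2 ∂μ) * (ζ j * ζ i) :=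
        Finset.sum_congr rfl fun j _ => Finset.sum_congr rfl fun i _ => by
          rw [dist_pow hp (hB2 _ (hz j)) (hB2 _ (hz i)) (hBLp _ (hz j)) (hBLp _ (hz i))]
    _ = ∑ j, ∑ i, ∫ ω, ((z j) ω - (z i) ω) ^ 2 * (ζ j * ζ i) ∂μ :=
        Finset.sum_congr rfl fun j _ => Finset.sum_congr rfl fun i _ =>
          (integral_mul_const _ _).symm
    _ = ∫ ω, ∑ j, ∑ i, ((z j) ω - (z i) ω) ^ 2 * (ζ j * ζ i) ∂μ := by
        rw [integral_finset_sum _ (fun j _ => integrable_finset_sum (Finset.univ)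
          fun i _ => (hint j i).mul_const (ζ j * ζ i))]
        exact Finset.sum_congr rfl fun j _ =>
          (integral_finset_sum _ fun i _ => (hint j i).mul_const _).symm
    _ = ∫ ω, -2 * (∑ k, ζ k * (z k) ω) ^ 2 ∂μ := by
        congr 1; funext ω; exact sum_identity ζ (fun k => (z k) ω) hζ
    _ = -2 * ∫ ω, (∑ k, ζ k * (z k) ω) ^ 2 ∂μ := integral_const_mul _ _

include hB2 hBLp in
lemma integrable_g' (hp : 0 < p) {n : ℕ} (z : Fin n → (Ω →ₘ[μ] ℝ)) (hz : ∀ k, z k ∈ B)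
    (ζ : Fin n → ℝ) (hζ : ∑ k, ζ k = 0) :
    Integrable (fun ω => (∑ k, ζ k * (z k) ω) ^ 2) μ := by
  have hint : ∀ j i : Fin n, Integrable (fun ω => ((z j) ω - (z i) ω) ^ 2) μ := fun j i =>
    integrable_sq hp (hB2 _ (hz j)) (hB2 _ (hz i)) (hBLp _ (hz j)) (hBLp _ (hz i))
  have : (fun ω => (∑ k, ζ k * (z k) ω) ^ 2)
      = fun ω => (-(1/2) : ℝ) * ∑ j, ∑ i, ((z j) ω - (z i) ω) ^ 2 * (ζ j * ζ i) := by
    funext ω; rw [sum_identity ζ (fun k => (z k) ω) hζ]; ring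
  rw [this]
  exact (integrable_finset_sum _ fun j _ =>
    integrable_finset_sum _ fun i _ => (hint j i).mul_const _).const_mul _
end key

end aux

/-- A two-valued subset of `L_p(Ω, μ)` has strict `p`-negative type
(with the metric inherited from `L_p(Ω, μ)`) if and only if it is affinely independent
as a subset of the real vector space `L_p(Ω, μ)`. -/
theorem twoValued_strictNegativeType_iff_affineIndependent {Ω : Type*} [MeasurableSpace Ω]
    (μ : Measure Ω) (p : ℝ) (hp : 0 < p) (B : Set (Ω →ₘ[μ] ℝ)) (hB : TwoValued B)
    (hBLp : ∀ f ∈ B, MemLp (⇑f) (ENNReal.ofReal p) μ) :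
    HasStrictNegativeType (lpDist p μ) p B ↔
      AffineIndependent ℝ ((↑) : B → (Ω →ₘ[μ] ℝ)) := by
  have hB2 := hB.2
  constructor
  · rintro ⟨-, hS⟩
    rw [affineIndependent_iff]
    intro s w hw0 hwsum
    by_contra hne
    push_neg at hne
    obtain ⟨e, hes, hwe⟩ := hne
    set s' := s.filter (fun b => w b ≠ 0) with hs'
    have hmem : ∀ b ∈ s', w b ≠ 0 := fun b hb => (Finset.mem_filter.1 hb).2
    have hsum0 : ∑ b ∈ s', w b = 0 := by
      rw [hs', Finset.sum_filter_ne_zero]; exact hw0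
    have hsumv : ∑ b ∈ s', w b • ((b : B) : Ω →ₘ[μ] ℝ) = 0 := by
      rw [hs', Finset.sum_filter_of_ne, hwsum]
      intro b _ hb hwb
      exact hb (by rw [hwb, zero_smul])
    have hne' : s'.Nonempty := ⟨e, Finset.mem_filter.2 ⟨hes, hwe⟩⟩
    have hcard : 2 ≤ s'.card := by
      rcases Nat.lt_or_ge s'.card 2 with h | h
      · exfalso
        interval_cases h' : s'.card
        · exact Finset.card_ne_zero_of_mem hne'.choose_spec h'
        · obtain ⟨b, hb⟩ := Finset.card_eq_one.1 h'
          have := hsum0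
          rw [hb, Finset.sum_singleton] at this
          exact hmem b (hb ▸ Finset.mem_singleton_self b) this
      · exact h
    set n := s'.card with hn
    set E : Fin n ≃ s' := s'.equivFin.symm with hE
    set z : Fin n → (Ω →ₘ[μ] ℝ) := fun k => (((E k : B)) : Ω →ₘ[μ] ℝ) with hzdef
    have hzinj : Function.Injective z := fun a b hab =>
      E.injective (Subtype.ext (Subtype.ext hab))
    have hzB : ∀ k, z k ∈ B := fun k => ((E k : B)).2
    set ζ : Fin n → ℝ := fun k => w (E k) with hζdef
    have hζ0 : ∑ k, ζ k = 0 := by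
      rw [hζdef]
      rw [Equiv.sum_comp E (fun x : s' => w x), Finset.sum_coe_sort]
      exact hsum0
    have hζne : ζ ≠ 0 := by
      intro h
      have h0 : (0 : ℕ) < n := by omega
      have := congrFun h ⟨0, h0⟩
      exact hmem _ (E ⟨0, h0⟩).2 this
    have hsum' : ∑ k, ζ k • z k = 0 := by
      rw [hζdef, hzdef]
      rw [Equiv.sum_comp E (fun x : s' => w x • ((x : B) : Ω →ₘ[μ] ℝ)),
        Finset.sum_coe_sort s' (fun b => w b • ((b : B) : Ω →ₘ[μ] ℝ))]
      exact hsumv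
    have hlt := hS n hcard z hzinj hzB ζ hζ0 hζne
    have hkey := key' hB2 hBLp hp z hzB ζ hζ0
    have hzero : ⇑(∑ k, ζ k • z k) =ᵐ[μ] (0 : Ω → ℝ) := by
      rw [hsum']; exact AEEqFun.coeFn_zero
    have hg0 : (fun ω => (∑ k, ζ k * (z k) ω) ^ 2) =ᵐ[μ] (fun _ => (0:ℝ)) := by
      filter_upwards [hzero, coe_sum_smul z ζ] with ω h1 h2
      rw [← h2, h1]; simp
    rw [integral_congr_ae hg0, integral_const, smul_zero, mul_zero] at hkey
    rw [hkey] at hlt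
    exact lt_irrefl 0 hlt
  · intro hAI
    have hNT : HasNegativeType (lpDist p μ) p B := by
      intro n _ z _ hzB ζ hζ
      rw [key' hB2 hBLp hp z hzB ζ hζ]
      have h0 : 0 ≤ ∫ ω, (∑ k, ζ k * (z k) ω) ^ 2 ∂μ :=
        integral_nonneg fun ω => sq_nonneg _
      nlinarith
    refine ⟨hNT, ?_⟩
    intro n _ z hzinj hzB ζ hζ hζne
    rw [key' hB2 hBLp hp z hzB ζ hζ]
    have hg := integrable_g' hB2 hBLp hp z hzB ζ hζ
    have h0 : 0 ≤ ∫ ω, (∑ k, ζ k * (z k) ω) ^ 2 ∂μ :=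
      integral_nonneg fun ω => sq_nonneg _
    rcases h0.lt_or_eq with h | h
    · nlinarith
    · exfalso
      have hz0 : (fun ω => (∑ k, ζ k * (z k) ω) ^ 2) =ᵐ[μ] 0 :=
        (integral_eq_zero_iff_of_nonneg_ae (Eventually.of_forall fun ω => sq_nonneg _) hg).1 h.symm
      have hsum0 : (∑ k, ζ k • z k : Ω →ₘ[μ] ℝ) = 0 := by
        apply MeasureTheory.AEEqFun.ext
        filter_upwards [coe_sum_smul z ζ, hz0,
          (AEEqFun.coeFn_zero (β := ℝ) (μ := μ))] with ω h1 h2 h3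
        rw [h1, h3]
        have h2' : (∑ k, ζ k * (z k) ω) ^ 2 = 0 := h2
        simpa using (pow_eq_zero_iff two_ne_zero).mp h2'
      set z' : Fin n ↪ B := ⟨fun k => ⟨z k, hzB k⟩, fun a b hab =>
        hzinj (congrArg Subtype.val hab)⟩ with hz'
      have hAI' := hAI.comp_embedding z'
      obtain ⟨k, hk⟩ := Function.ne_iff.1 hζne
      exact hk (affineIndependent_iff.1 hAI' Finset.univ ζ hζ (by exact hsum0) k
        (Finset.mem_univ k))
end

section
/- Let p ∈ (0, ∞), let (Ω, μ) be a measure space, and let B ⊂ L_p(Ω, μ) be a two-valued set. If B is affinely dependent when L_p(Ω, μ) is considered as a real vector space, then the generalized roundness of B (with the metric inherited from L_p(Ω, μ)) equals p; that is, B has p-negative type but does not have q-negative type for any q > p. -/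
open MeasureTheory ENNReal Filter
open scoped Classical

/-! ### Auxiliary lemmas: positive semidefinite kernels and Schoenberg-type arguments -/

section PSD

open Set Matrix

/-- Entrywise powers of a PSD kernel are PSD (Schur product theorem, via Gram vectors). -/
lemma psd_pow_of_psd {n : ℕ} (K : Fin n → Fin n → ℝ) (hsym : ∀ j i, K j i = K i j)
    (hpsd : ∀ ξ : Fin n → ℝ, 0 ≤ ∑ j, ∑ i, K j i * (ξ j * ξ i)) (m : ℕ) :
    ∀ ξ : Fin n → ℝ, 0 ≤ ∑ j, ∑ i, (K j i) ^ m * (ξ j * ξ i) := by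
  classical
  set M : Matrix (Fin n) (Fin n) ℝ := Matrix.of K with hM
  have hMpsd : M.PosSemidef := by
    refine Matrix.PosSemidef.of_dotProduct_mulVec_nonneg ?_ ?_
    · ext j i
      simp [Matrix.conjTranspose, hM, hsym i j]
    · intro x
      have hx : star x ⬝ᵥ M.mulVec x = ∑ j, ∑ i, K j i * (x j * x i) := by
        simp only [dotProduct, Matrix.mulVec, dotProduct, hM, Matrix.of_apply,
          Finset.mul_sum]
        refine Finset.sum_congr rfl fun j _ => Finset.sum_congr rfl fun i _ => by
          simp only [Pi.star_apply, star_trivial]; ring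
      rw [hx]; exact hpsd x
  obtain ⟨Bm, hB⟩ : ∃ Bm : Matrix (Fin n) (Fin n) ℝ, M = Bm.conjTranspose * Bm := by
    open scoped MatrixOrder in exact CStarAlgebra.nonneg_iff_eq_star_mul_self.mp hMpsd.nonneg
  have hK : ∀ j i, K j i = ∑ a, Bm a j * Bm a i := by
    intro j i
    have : M j i = (Bm.conjTranspose * Bm) j i := by rw [hB]
    simpa [hM, Matrix.mul_apply, Matrix.conjTranspose_apply] using this
  intro ξ
  have hKm : ∀ j i, (K j i) ^ m * (ξ j * ξ i)
      = ∑ g : Fin m → Fin n, ((∏ t, Bm (g t) j) * ξ j) * ((∏ t, Bm (g t) i) * ξ i) := by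
    intro j i
    have h1 : (K j i) ^ m = ∏ _t : Fin m, ∑ a, Bm a j * Bm a i := by
      rw [hK j i, Finset.prod_const, Finset.card_univ, Fintype.card_fin]
    rw [h1, Finset.prod_univ_sum]
    simp only [Fintype.piFinset_univ]
    rw [Finset.sum_mul]
    refine Finset.sum_congr rfl fun g _ => ?_
    rw [Finset.prod_mul_distrib]
    ring
  calc (0:ℝ) ≤ ∑ g : Fin m → Fin n, (∑ j, (∏ t, Bm (g t) j) * ξ j) ^ 2 := by positivity
  _ = ∑ g : Fin m → Fin n, (∑ j, (∏ t, Bm (g t) j) * ξ j) * (∑ i, (∏ t, Bm (g t) i) * ξ i) := by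
      simp [sq]
  _ = ∑ g : Fin m → Fin n, ∑ j, ∑ i, ((∏ t, Bm (g t) j) * ξ j) * ((∏ t, Bm (g t) i) * ξ i) := by
      refine Finset.sum_congr rfl fun g _ => ?_
      rw [Finset.sum_mul_sum]
  _ = ∑ j, ∑ i, ∑ g : Fin m → Fin n, ((∏ t, Bm (g t) j) * ξ j) * ((∏ t, Bm (g t) i) * ξ i) := by
      rw [Finset.sum_comm]
      exact Finset.sum_congr rfl fun j _ => Finset.sum_comm
  _ = ∑ j, ∑ i, (K j i) ^ m * (ξ j * ξ i) := by
      refine Finset.sum_congr rfl fun j _ => Finset.sum_congr rfl fun i _ => (hKm j i).symm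

/-- The entrywise exponential of a nonnegative multiple of a PSD kernel is PSD. -/
lemma psd_exp_of_psd {n : ℕ} (K : Fin n → Fin n → ℝ) (hsym : ∀ j i, K j i = K i j)
    (hpsd : ∀ ξ : Fin n → ℝ, 0 ≤ ∑ j, ∑ i, K j i * (ξ j * ξ i)) {l : ℝ} (hl : 0 ≤ l) :
    ∀ ξ : Fin n → ℝ, 0 ≤ ∑ j, ∑ i, Real.exp (l * K j i) * (ξ j * ξ i) := by
  intro ξ
  have hexp : ∀ x : ℝ, Real.exp x = ∑' m : ℕ, x ^ m / m.factorial := by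
    intro x
    rw [Real.exp_eq_exp_ℝ, NormedSpace.exp_eq_tsum_div]
  have hsummable : ∀ j i : Fin n, Summable (fun m : ℕ =>
      (l * K j i) ^ m / m.factorial * (ξ j * ξ i)) := fun j i =>
    (Real.summable_pow_div_factorial (l * K j i)).mul_right _
  have key : ∑ j, ∑ i, Real.exp (l * K j i) * (ξ j * ξ i)
      = ∑' m : ℕ, ∑ j, ∑ i, (l * K j i) ^ m / m.factorial * (ξ j * ξ i) := by
    rw [Summable.tsum_finsetSum (fun j _ => by
      exact summable_sum fun i _ => hsummable j i)]
    refine Finset.sum_congr rfl fun j _ => ?_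
    rw [Summable.tsum_finsetSum (fun i _ => hsummable j i)]
    refine Finset.sum_congr rfl fun i _ => ?_
    rw [hexp (l * K j i), ← tsum_mul_right]
  rw [key]
  refine tsum_nonneg fun m => ?_
  have h1 : ∀ j i : Fin n, (l * K j i) ^ m / m.factorial * (ξ j * ξ i)
      = (l ^ m / m.factorial) * ((K j i) ^ m * (ξ j * ξ i)) := by
    intro j i; rw [mul_pow]; ring
  simp only [h1, ← Finset.mul_sum]
  have := psd_pow_of_psd K hsym hpsd m ξ
  positivity

/-- From a kernel of negative type, the base-point construction produces a PSD kernel. -/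
lemma psd_K_of_negType {n : ℕ} (T : Fin n → Fin n → ℝ) (b : Fin n)
    (hdiag : T b b = 0)
    (hNT : ∀ ζ : Fin n → ℝ, ∑ k, ζ k = 0 → ∑ j, ∑ i, T j i * (ζ j * ζ i) ≤ 0) :
    ∀ ξ : Fin n → ℝ, 0 ≤ ∑ j, ∑ i, (T j b + T b i - T j i) * (ξ j * ξ i) := by
  classical
  intro ξ
  set σ : ℝ := ∑ k, ξ k with hσ
  set ζ : Fin n → ℝ := fun j => ξ j - (if j = b then σ else 0) with hζ
  have hζsum : ∑ k, ζ k = 0 := by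
    simp [hζ, Finset.sum_sub_distrib, ← hσ]
  have hQ := hNT ζ hζsum
  have hexp : ∑ j, ∑ i, T j i * (ζ j * ζ i)
      = ∑ j, ∑ i, T j i * (ξ j * ξ i) - σ * ∑ i, T b i * ξ i - σ * ∑ j, T j b * ξ j
        + σ * σ * T b b := by
    have hterm : ∀ j i, T j i * (ζ j * ζ i)
        = T j i * (ξ j * ξ i) - (if j = b then σ * (T j i * ξ i) else 0)
          - (if i = b then σ * (T j i * ξ j) else 0)
          + (if j = b then (if i = b then σ * σ * T j i else 0) else 0) := by
      intro j i
      by_cases hj : j = b <;> by_cases hi : i = b <;> simp [hζ, hj, hi] <;> ring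
    simp only [hterm, Finset.sum_add_distrib, Finset.sum_sub_distrib]
    congr 1
    · congr 1
      · congr 1
        · rw [Finset.sum_comm]
          simp [Finset.sum_ite_eq', Finset.mul_sum]
      · simp [Finset.sum_ite_eq', Finset.mul_sum]
    · simp [Finset.sum_ite_eq']
  have hKexp : ∑ j, ∑ i, (T j b + T b i - T j i) * (ξ j * ξ i)
      = σ * ∑ j, T j b * ξ j + σ * ∑ i, T b i * ξ i - ∑ j, ∑ i, T j i * (ξ j * ξ i) := by
    have hterm : ∀ j i, (T j b + T b i - T j i) * (ξ j * ξ i)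
        = (T j b * ξ j) * ξ i + ξ j * (T b i * ξ i) - T j i * (ξ j * ξ i) := by
      intro j i; ring
    simp only [hterm, Finset.sum_add_distrib, Finset.sum_sub_distrib, ← Finset.sum_mul,
      ← Finset.mul_sum]
    ring
  rw [hKexp]
  rw [hexp, hdiag] at hQ
  linarith

/-- Schoenberg: the entrywise exponential `exp(-λT)` of a negative-type kernel is PSD. -/
lemma psd_exp_of_negType {n : ℕ} (T : Fin n → Fin n → ℝ) (b : Fin n)
    (hsym : ∀ j i, T j i = T i j) (hdiag : ∀ j, T j j = 0)
    (hNT : ∀ ζ : Fin n → ℝ, ∑ k, ζ k = 0 → ∑ j, ∑ i, T j i * (ζ j * ζ i) ≤ 0)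
    {l : ℝ} (hl : 0 ≤ l) :
    ∀ ξ : Fin n → ℝ, 0 ≤ ∑ j, ∑ i, Real.exp (-(T j i * l)) * (ξ j * ξ i) := by
  intro ξ
  set K : Fin n → Fin n → ℝ := fun j i => T j b + T b i - T j i with hK
  have hKsym : ∀ j i, K j i = K i j := by
    intro j i; simp only [hK]; rw [hsym j b, hsym b i, hsym j i]; ring
  have hKpsd := psd_K_of_negType T b (hdiag b) hNT
  set ξ' : Fin n → ℝ := fun j => ξ j * Real.exp (-(T j b * l)) with hξ'
  have hterm : ∀ j i, Real.exp (-(T j i * l)) * (ξ j * ξ i)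
      = Real.exp (l * K j i) * (ξ' j * ξ' i) := by
    intro j i
    have hE : (-(T j i * l)) = l * K j i + (-(T j b * l)) + (-(T i b * l)) := by
      simp only [hK]; rw [hsym b i]; ring
    rw [hE, Real.exp_add, Real.exp_add]
    simp only [hξ']; ring
  simp only [hterm]
  exact psd_exp_of_psd K hKsym hKpsd hl ξ'

/-- Integrability of `(1 - exp(-tl)) l^(-1-a)` on `(0, ∞)` for `0 < a < 1`, `0 ≤ t`. -/
lemma integrable_aux {a t : ℝ} (ha0 : 0 < a) (ha1 : a < 1) (ht : 0 ≤ t) :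
    IntegrableOn (fun l : ℝ => (1 - Real.exp (-(t * l))) * l ^ (-1 - a)) (Ioi 0) := by
  rcases eq_or_lt_of_le ht with h0 | ht'
  · have hfun : (fun l : ℝ => (1 - Real.exp (-(t * l))) * l ^ (-1 - a)) = fun _ => 0 := by
      funext l; rw [← h0]; simp
    rw [hfun]; exact integrableOn_zero
  have hmeas : Measurable fun l : ℝ => (1 - Real.exp (-(t * l))) * l ^ (-1 - a) := by
    fun_prop
  have hunion : Ioc (0:ℝ) 1 ∪ Ioi (1:ℝ) = Ioi 0 := Ioc_union_Ioi_eq_Ioi zero_le_one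
  rw [← hunion]
  apply IntegrableOn.union
  · have h1 : IntegrableOn (fun l : ℝ => l ^ (-a)) (Ioc 0 1) :=
      (intervalIntegrable_iff_integrableOn_Ioc_of_le zero_le_one).mp
        (intervalIntegral.intervalIntegrable_rpow' (by linarith))
    have h2 : IntegrableOn (fun l : ℝ => t * l ^ (-a)) (Ioc 0 1) := h1.const_mul t
    refine Integrable.mono' h2 hmeas.aestronglyMeasurable.restrict ?_
    refine (ae_restrict_iff' measurableSet_Ioc).2 (ae_of_all _ fun l hl => ?_)
    have hl0 : 0 < l := hl.1
    have hexple : Real.exp (-(t * l)) ≤ 1 :=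
      Real.exp_le_one_iff.2 (by nlinarith)
    have hnn : 0 ≤ (1 - Real.exp (-(t * l))) * l ^ (-1 - a) :=
      mul_nonneg (by linarith) (Real.rpow_nonneg hl0.le _)
    rw [Real.norm_eq_abs, abs_of_nonneg hnn]
    have hb : 1 - Real.exp (-(t * l)) ≤ t * l := by
      have := Real.add_one_le_exp (-(t * l)); linarith
    have hll : l * l ^ (-1 - a) = l ^ (-a) := by
      nth_rewrite 1 [← Real.rpow_one l]
      rw [← Real.rpow_add hl0]; ring_nf
    calc (1 - Real.exp (-(t * l))) * l ^ (-1 - a)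
        ≤ (t * l) * l ^ (-1 - a) :=
          mul_le_mul_of_nonneg_right hb (Real.rpow_nonneg hl0.le _)
      _ = t * l ^ (-a) := by rw [mul_assoc, hll]
  · have h1 : IntegrableOn (fun l : ℝ => l ^ (-1 - a)) (Ioi 1) :=
      integrableOn_Ioi_rpow_of_lt (by linarith) zero_lt_one
    refine Integrable.mono' h1 hmeas.aestronglyMeasurable.restrict ?_
    refine (ae_restrict_iff' measurableSet_Ioi).2 (ae_of_all _ fun l hl => ?_)
    have hl0 : (0:ℝ) < l := lt_trans zero_lt_one hl
    have hexple : Real.exp (-(t * l)) ≤ 1 :=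
      Real.exp_le_one_iff.2 (by nlinarith)
    have hnn : 0 ≤ (1 - Real.exp (-(t * l))) * l ^ (-1 - a) :=
      mul_nonneg (by linarith) (Real.rpow_nonneg hl0.le _)
    rw [Real.norm_eq_abs, abs_of_nonneg hnn]
    have hb : 1 - Real.exp (-(t * l)) ≤ 1 := by
      have := Real.exp_pos (-(t * l)); linarith
    calc (1 - Real.exp (-(t * l))) * l ^ (-1 - a)
        ≤ 1 * l ^ (-1 - a) :=
          mul_le_mul_of_nonneg_right hb (Real.rpow_nonneg hl0.le _)
      _ = l ^ (-1 - a) := one_mul _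

/-- The integral representation `∫ (1-e^{-tl}) l^{-1-a} dl = C · t^a`. -/
lemma rep_integral {a t : ℝ} (ha0 : 0 < a) (ha1 : a < 1) (ht : 0 ≤ t) :
    ∫ l in Ioi (0:ℝ), (1 - Real.exp (-(t * l))) * l ^ (-1 - a)
      = (∫ u in Ioi (0:ℝ), (1 - Real.exp (-u)) * u ^ (-1 - a)) * t ^ a := by
  rcases eq_or_lt_of_le ht with h0 | ht'
  · have hfun : (fun l : ℝ => (1 - Real.exp (-(t * l))) * l ^ (-1 - a)) = fun _ => (0:ℝ) := by
      funext l; rw [← h0]; simp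
    rw [hfun, ← h0, Real.zero_rpow ha0.ne', mul_zero]
    simp
  set φ : ℝ → ℝ := fun u => (1 - Real.exp (-u)) * u ^ (-1 - a) with hφ
  have step1 : ∫ l in Ioi (0:ℝ), (1 - Real.exp (-(t * l))) * l ^ (-1 - a)
      = ∫ l in Ioi (0:ℝ), t ^ ((1:ℝ) + a) * φ (t * l) := by
    refine setIntegral_congr_fun measurableSet_Ioi fun l hl => ?_
    have hl0 : (0:ℝ) < l := hl
    simp only [hφ]
    rw [Real.mul_rpow ht'.le hl0.le]
    rw [show t ^ ((1:ℝ) + a) * ((1 - Real.exp (-(t * l))) * (t ^ (-1 - a) * l ^ (-1 - a)))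
        = (t ^ ((1:ℝ) + a) * t ^ (-1 - a)) * ((1 - Real.exp (-(t * l))) * l ^ (-1 - a)) by ring]
    rw [← Real.rpow_add ht']
    norm_num
  rw [step1, MeasureTheory.integral_const_mul]
  rw [integral_comp_mul_left_Ioi φ 0 ht', mul_zero]
  simp only [smul_eq_mul]
  rw [show t ^ ((1:ℝ) + a) * (t⁻¹ * ∫ u in Ioi (0:ℝ), φ u)
      = (t ^ ((1:ℝ) + a) * t⁻¹) * ∫ u in Ioi (0:ℝ), φ u by ring]
  rw [← Real.rpow_neg_one t, ← Real.rpow_add ht']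
  rw [show (1:ℝ) + a + -1 = a by ring]
  ring

/-- Positivity of the normalization constant. -/
lemma C_pos {a : ℝ} (ha0 : 0 < a) (ha1 : a < 1) :
    0 < ∫ u in Ioi (0:ℝ), (1 - Real.exp (-u)) * u ^ (-1 - a) := by
  have hint : IntegrableOn (fun u : ℝ => (1 - Real.exp (-u)) * u ^ (-1 - a)) (Ioi 0) := by
    have := integrable_aux ha0 ha1 (zero_le_one)
    simpa using this
  have hsub : Ioc (1:ℝ) 2 ⊆ Ioi (0:ℝ) := fun x hx => lt_trans zero_lt_one hx.1
  have hnn : 0 ≤ᵐ[volume.restrict (Ioi (0:ℝ))] fun u : ℝ => (1 - Real.exp (-u)) * u ^ (-1 - a) := by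
    refine (ae_restrict_iff' measurableSet_Ioi).2 (ae_of_all _ fun u hu => ?_)
    have h1 : Real.exp (-u) ≤ 1 := Real.exp_le_one_iff.2 (by simp [le_of_lt (mem_Ioi.1 hu)])
    exact mul_nonneg (by linarith) (Real.rpow_nonneg (le_of_lt (mem_Ioi.1 hu)) _)
  have h1 : ∫ u in Ioc (1:ℝ) 2, (1 - Real.exp (-u)) * u ^ (-1 - a)
      ≤ ∫ u in Ioi (0:ℝ), (1 - Real.exp (-u)) * u ^ (-1 - a) :=
    setIntegral_mono_set hint hnn (HasSubset.Subset.eventuallyLE hsub)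
  have hconst : (0:ℝ) < (1 - Real.exp (-1)) * (2:ℝ) ^ (-1 - a) := by
    have he : Real.exp (-1) < 1 := by
      have := Real.exp_lt_exp.2 (show (-1:ℝ) < 0 by norm_num)
      simpa [Real.exp_zero] using this
    have := Real.rpow_pos_of_pos (show (0:ℝ) < 2 by norm_num) (-1 - a)
    nlinarith
  have h2 : (1 - Real.exp (-1)) * (2:ℝ) ^ (-1 - a)
      ≤ ∫ u in Ioc (1:ℝ) 2, (1 - Real.exp (-u)) * u ^ (-1 - a) := by
    have hc : ∫ _u in Ioc (1:ℝ) 2, ((1 - Real.exp (-1)) * (2:ℝ) ^ (-1 - a))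
        = (1 - Real.exp (-1)) * (2:ℝ) ^ (-1 - a) := by
      rw [setIntegral_const, Real.volume_real_Ioc]
      norm_num
    rw [← hc]
    refine setIntegral_mono_on (integrableOn_const ?_)
      (hint.mono_set hsub) measurableSet_Ioc fun u hu => ?_
    · rw [Real.volume_Ioc]; exact ofReal_ne_top
    · have hu0 : (0:ℝ) < u := lt_trans zero_lt_one hu.1
      have hf1 : Real.exp (-1) ≥ Real.exp (-u) := Real.exp_le_exp.2 (by linarith [hu.1.le])
      have hf2 : (2:ℝ) ^ (-1 - a) ≤ u ^ (-1 - a) :=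
        Real.rpow_le_rpow_of_nonpos hu0 hu.2 (by linarith)
      have he : Real.exp (-u) ≤ 1 := Real.exp_le_one_iff.2 (by linarith)
      refine mul_le_mul (by linarith) hf2 (Real.rpow_nonneg (by norm_num) _) (by linarith)
  linarith

/-- Key strictness lemma: if `T` is a symmetric kernel with zero diagonal, positive
off-diagonal entries, and of negative type, then for `0 < a < 1` the form attached to the
entrywise power `T^a` is strictly negative on nonzero mean-zero vectors. -/
lemma key_strict {n : ℕ} (T : Fin n → Fin n → ℝ)
    (hsym : ∀ j i, T j i = T i j) (hdiag : ∀ j, T j j = 0)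
    (hpos : ∀ j i, j ≠ i → 0 < T j i)
    (hNT : ∀ ζ : Fin n → ℝ, ∑ k, ζ k = 0 → ∑ j, ∑ i, T j i * (ζ j * ζ i) ≤ 0)
    {a : ℝ} (ha0 : 0 < a) (ha1 : a < 1)
    (ζ : Fin n → ℝ) (hζ : ∑ k, ζ k = 0) (hζ0 : ζ ≠ 0) :
    ∑ j, ∑ i, (T j i) ^ a * (ζ j * ζ i) < 0 := by
  classical
  have hTnn : ∀ j i, 0 ≤ T j i := by
    intro j i
    rcases eq_or_ne j i with rfl | h
    · exact le_of_eq (hdiag j).symm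
    · exact (hpos j i h).le
  have hn : n ≠ 0 := by
    rintro rfl
    exact hζ0 (funext fun k => k.elim0)
  obtain ⟨b⟩ : Nonempty (Fin n) := ⟨⟨0, Nat.pos_of_ne_zero hn⟩⟩
  set c : ℝ := -1 - a with hc
  set C : ℝ := ∫ u in Ioi (0:ℝ), (1 - Real.exp (-u)) * u ^ c with hCdef
  have hC : 0 < C := C_pos ha0 ha1
  set S : ℝ := ∑ j, ∑ i, (T j i) ^ a * (ζ j * ζ i) with hSdef
  set G : ℝ → ℝ := fun l => ∑ j, ∑ i, Real.exp (-(T j i * l)) * (ζ j * ζ i) with hGdef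
  set H : ℝ → ℝ := fun l =>
    ∑ j, ∑ i, (1 - Real.exp (-(T j i * l))) * l ^ c * (ζ j * ζ i) with hHdef
  have hHint_each : ∀ j i : Fin n, IntegrableOn
      (fun l : ℝ => (1 - Real.exp (-(T j i * l))) * l ^ c * (ζ j * ζ i)) (Ioi 0) :=
    fun j i => (integrable_aux ha0 ha1 (hTnn j i)).mul_const _
  have hHint : IntegrableOn H (Ioi 0) := by
    refine integrable_finset_sum _ fun j _ => integrable_finset_sum _ fun i _ => hHint_each j i
  have hCS : C * S = ∫ l in Ioi (0:ℝ), H l := by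
    have step1 : C * S = ∑ j, ∑ i,
        (∫ l in Ioi (0:ℝ), (1 - Real.exp (-(T j i * l))) * l ^ c) * (ζ j * ζ i) := by
      rw [hSdef, Finset.mul_sum]
      refine Finset.sum_congr rfl fun j _ => ?_
      rw [Finset.mul_sum]
      refine Finset.sum_congr rfl fun i _ => ?_
      rw [rep_integral ha0 ha1 (hTnn j i), ← hCdef]
      ring
    rw [step1, hHdef,
      integral_finset_sum _ fun j _ => integrable_finset_sum _ fun i _ => hHint_each j i]
    refine Finset.sum_congr rfl fun j _ => ?_
    rw [integral_finset_sum _ fun i _ => hHint_each j i]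
    exact Finset.sum_congr rfl fun i _ => (integral_mul_const _ _).symm
  have hHG : ∀ l : ℝ, H l = -(G l * l ^ c) := by
    intro l
    have hterm : ∀ j i : Fin n, (1 - Real.exp (-(T j i * l))) * l ^ c * (ζ j * ζ i)
        = l ^ c * (ζ j * ζ i) - Real.exp (-(T j i * l)) * (ζ j * ζ i) * l ^ c := by
      intro j i; ring
    simp only [hHdef, hGdef, hterm, Finset.sum_sub_distrib, ← Finset.sum_mul, ← Finset.mul_sum]
    rw [hζ]
    ring
  have hGnn : ∀ l : ℝ, 0 ≤ l → 0 ≤ G l := fun l hl =>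
    psd_exp_of_negType T b hsym hdiag hNT hl ζ
  set s0 : ℝ := ∑ k, ζ k ^ 2 with hs0def
  have hs0 : 0 < s0 := by
    obtain ⟨k0, hk0⟩ := Function.ne_iff.1 hζ0
    refine Finset.sum_pos' (fun k _ => sq_nonneg _) ⟨k0, Finset.mem_univ _, ?_⟩
    have : ζ k0 ≠ 0 := hk0
    positivity
  have hGtend : Tendsto G atTop (nhds s0) := by
    have : s0 = ∑ j, ∑ i : Fin n, (if j = i then ζ j * ζ i else 0) := by
      rw [hs0def]
      refine Finset.sum_congr rfl fun j _ => ?_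
      rw [Finset.sum_ite_eq (Finset.univ) j (fun i => ζ j * ζ i)]
      simp [sq]
    rw [this, hGdef]
    refine tendsto_finset_sum _ fun j _ => tendsto_finset_sum _ fun i _ => ?_
    rcases eq_or_ne j i with rfl | hji
    · have : (fun l : ℝ => Real.exp (-(T j j * l)) * (ζ j * ζ j))
          = fun _ => ζ j * ζ j := by
        funext l; rw [hdiag j]; simp
      rw [this]
      simpa using tendsto_const_nhds
    · simp only [if_neg hji]
      have h1 : Tendsto (fun l : ℝ => -(T j i * l)) atTop atBot := by
        exact (tendsto_neg_atTop_atBot).comp (tendsto_id.const_mul_atTop (hpos j i hji))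
      have h2 : Tendsto (fun l : ℝ => Real.exp (-(T j i * l))) atTop (nhds 0) :=
        Real.tendsto_exp_atBot.comp h1
      simpa using h2.mul_const (ζ j * ζ i)
  obtain ⟨A0, hA0⟩ := (eventually_atTop).1 (hGtend.eventually (eventually_ge_nhds
    (by linarith : s0 / 2 < s0)))
  set A : ℝ := max A0 1 with hAdef
  have hA1 : (1:ℝ) ≤ A := le_max_right _ _
  have hGA : ∀ l, A ≤ l → s0 / 2 ≤ G l := fun l hl =>
    hA0 l (le_trans (le_max_left _ _) hl)
  have hGfun : (fun l : ℝ => G l * l ^ c) = fun l => -H l := by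
    funext l; rw [hHG l]; ring
  have hGint : IntegrableOn (fun l : ℝ => G l * l ^ c) (Ioi 0) := by
    rw [hGfun]; exact hHint.neg
  have hsub : Ioc A (A + 1) ⊆ Ioi (0:ℝ) := fun x hx => lt_of_lt_of_le
    (lt_of_lt_of_le zero_lt_one hA1) hx.1.le
  have hmono1 : ∫ l in Ioc A (A + 1), G l * l ^ c ≤ ∫ l in Ioi (0:ℝ), G l * l ^ c := by
    refine setIntegral_mono_set hGint ?_ (HasSubset.Subset.eventuallyLE hsub)
    refine (ae_restrict_iff' measurableSet_Ioi).2 (ae_of_all _ fun l hl => ?_)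
    exact mul_nonneg (hGnn l (le_of_lt hl)) (Real.rpow_nonneg (le_of_lt hl) _)
  have hmono2 : s0 / 2 * (A + 1) ^ c ≤ ∫ l in Ioc A (A + 1), G l * l ^ c := by
    have hconst : ∫ _l in Ioc A (A + 1), (s0 / 2 * (A + 1) ^ c) = s0 / 2 * (A + 1) ^ c := by
      rw [setIntegral_const, Real.volume_real_Ioc]
      norm_num
    rw [← hconst]
    refine setIntegral_mono_on (integrableOn_const ?_)
      (hGint.mono_set hsub) measurableSet_Ioc fun l hl => ?_
    · rw [Real.volume_Ioc]; exact ofReal_ne_top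
    · have hl0 : (0:ℝ) < l := hsub hl
      have h1 : s0 / 2 ≤ G l := hGA l hl.1.le
      have h2 : (A + 1) ^ c ≤ l ^ c :=
        Real.rpow_le_rpow_of_nonpos hl0 hl.2 (by rw [hc]; linarith)
      exact mul_le_mul h1 h2 (Real.rpow_nonneg (by linarith) _) (hGnn l hl0.le)
  have hpos2 : 0 < s0 / 2 * (A + 1) ^ c :=
    mul_pos (by linarith) (Real.rpow_pos_of_pos (by linarith) _)
  have hintpos : 0 < ∫ l in Ioi (0:ℝ), G l * l ^ c := lt_of_lt_of_le hpos2
    (le_trans hmono2 hmono1)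
  have hCS2 : C * S = -∫ l in Ioi (0:ℝ), G l * l ^ c := by
    rw [hCS, hGfun]
    rw [integral_neg]
    ring
  have hCSneg : C * S < 0 := by rw [hCS2]; linarith
  by_contra h
  push_neg at h
  exact absurd hCSneg (not_lt.2 (mul_nonneg hC.le h))

end PSD

/-! ### Auxiliary lemmas: two-valued functions in `L_p` -/

section TwoValuedLp

open Set

/-- Algebraic identity underlying the negative-type computation. -/
lemma alg_identity {n : ℕ} (a ζ : Fin n → ℝ) (h : ∑ k, ζ k = 0) :
    ∑ j, ∑ i, (a j - a i) ^ 2 * (ζ j * ζ i) = -2 * (∑ k, ζ k * a k) ^ 2 := by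
  have hterm : ∀ j i : Fin n, (a j - a i) ^ 2 * (ζ j * ζ i)
      = (a j ^ 2 * ζ j) * ζ i + ζ j * (a i ^ 2 * ζ i) - 2 * ((ζ j * a j) * (ζ i * a i)) := by
    intro j i; ring
  simp only [hterm, Finset.sum_add_distrib, Finset.sum_sub_distrib, ← Finset.sum_mul,
    ← Finset.mul_sum, h, zero_mul, mul_zero, zero_add, zero_sub]
  ring

variable {Ω : Type*} [MeasurableSpace Ω] {μ : Measure Ω} {p : ℝ}

/-- For two-valued members of `L_p`, the `p`-th power of the distance is the integral
of the squared difference. -/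
lemma dist_pow_eq_integral (hp : 0 < p) (f g : Ω →ₘ[μ] ℝ)
    (hf2 : ∀ᵐ ω ∂μ, (f : Ω → ℝ) ω ∈ ({0, 1} : Set ℝ))
    (hg2 : ∀ᵐ ω ∂μ, (g : Ω → ℝ) ω ∈ ({0, 1} : Set ℝ))
    (hfL : MemLp (⇑f) (ENNReal.ofReal p) μ) (hgL : MemLp (⇑g) (ENNReal.ofReal p) μ) :
    lpDist p μ f g ^ p = ∫ ω, ((f : Ω → ℝ) ω - g ω) ^ 2 ∂μ ∧
      Integrable (fun ω => ((f : Ω → ℝ) ω - g ω) ^ 2) μ := by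
  have hP0 : (ENNReal.ofReal p) ≠ 0 := by
    simp [ENNReal.ofReal_eq_zero, not_le, hp]
  have hPt : (ENNReal.ofReal p) ≠ ∞ := ofReal_ne_top
  have hval : ∀ᵐ ω ∂μ, (f ω - g ω = 0) ∨ (|f ω - g ω| = 1) := by
    filter_upwards [hf2, hg2] with ω hf hg
    simp only [Set.mem_insert_iff, Set.mem_singleton_iff] at hf hg
    rcases hf with hf | hf <;> rcases hg with hg | hg <;> rw [hf, hg] <;> norm_num
  set I : ℝ≥0∞ := ∫⁻ ω, ENNReal.ofReal ((f ω - g ω) ^ 2) ∂μ with hIdef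
  have hsubae : ⇑(f - g) =ᵐ[μ] fun ω => f ω - g ω := AEEqFun.coeFn_sub f g
  have hnorm : eLpNorm (⇑(f - g)) (ENNReal.ofReal p) μ = I ^ (1 / p) := by
    rw [eLpNorm_congr_ae hsubae, eLpNorm_eq_lintegral_rpow_enorm_toReal hP0 hPt,
      ENNReal.toReal_ofReal hp.le]
    congr 1
    refine lintegral_congr_ae ?_
    filter_upwards [hval] with ω hω
    rcases hω with hω | hω
    · rw [hω]; simp [ENNReal.zero_rpow_of_pos hp]
    · have h1 : ‖f ω - g ω‖ₑ = 1 := by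
        rw [Real.enorm_eq_ofReal_abs, hω]; simp
      have h2 : (f ω - g ω) ^ 2 = 1 := by
        rw [← sq_abs, hω]; norm_num
      rw [h1, h2]
      simp
  have haesm : AEStronglyMeasurable (fun ω => (f ω - g ω) ^ 2) μ := by
    exact ((f.aestronglyMeasurable.sub g.aestronglyMeasurable).pow 2)
  have hIfin : I ≠ ∞ := by
    have hmem : MemLp (⇑(f - g)) (ENNReal.ofReal p) μ :=
      MemLp.ae_eq hsubae.symm (hfL.sub hgL)
    have hlt := hmem.2
    rw [hnorm] at hlt
    intro hI
    rw [hI] at hlt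
    rw [ENNReal.top_rpow_of_pos (by positivity)] at hlt
    exact (lt_irrefl _ hlt)
  constructor
  · have h1 : lpDist p μ f g = I.toReal ^ (1 / p) := by
      rw [lpDist, hnorm, ← ENNReal.toReal_rpow]
    rw [h1, ← Real.rpow_mul ENNReal.toReal_nonneg, one_div_mul_cancel hp.ne', Real.rpow_one]
    rw [MeasureTheory.integral_eq_lintegral_of_nonneg_ae
      (ae_of_all _ fun ω => sq_nonneg (f ω - g ω)) haesm]
  · refine ⟨haesm, ?_⟩
    rw [hasFiniteIntegral_iff_norm]
    have heq : ∫⁻ ω, ENNReal.ofReal ‖(f ω - g ω) ^ 2‖ ∂μ = I :=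
      lintegral_congr_ae (ae_of_all _ fun ω => by
        simp only [Real.norm_eq_abs, abs_of_nonneg (sq_nonneg (f ω - g ω))])
    rw [heq]
    exact hIfin.lt_top

/-- The fundamental identity for the `p`-negative type form of a two-valued set. -/
lemma form_eq (hp : 0 < p) {n : ℕ} (z : Fin n → (Ω →ₘ[μ] ℝ))
    (h2 : ∀ k, ∀ᵐ ω ∂μ, (z k : Ω → ℝ) ω ∈ ({0, 1} : Set ℝ))
    (hL : ∀ k, MemLp (⇑(z k)) (ENNReal.ofReal p) μ)
    (ζ : Fin n → ℝ) (hζ : ∑ k, ζ k = 0) :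
    ∑ j, ∑ i, lpDist p μ (z j) (z i) ^ p * (ζ j * ζ i)
      = -2 * ∫ ω, (∑ k, ζ k * (z k : Ω → ℝ) ω) ^ 2 ∂μ := by
  have hint : ∀ j i : Fin n,
      Integrable (fun ω => ((z j : Ω → ℝ) ω - (z i : Ω → ℝ) ω) ^ 2 * (ζ j * ζ i)) μ :=
    fun j i => ((dist_pow_eq_integral hp (z j) (z i) (h2 j) (h2 i) (hL j) (hL i)).2).mul_const _
  calc ∑ j, ∑ i, lpDist p μ (z j) (z i) ^ p * (ζ j * ζ i)
      = ∑ j, ∑ i, ∫ ω, ((z j : Ω → ℝ) ω - (z i : Ω → ℝ) ω) ^ 2 * (ζ j * ζ i) ∂μ := by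
        refine Finset.sum_congr rfl fun j _ => Finset.sum_congr rfl fun i _ => ?_
        rw [(dist_pow_eq_integral hp (z j) (z i) (h2 j) (h2 i) (hL j) (hL i)).1,
          ← integral_mul_const]
    _ = ∫ ω, ∑ j, ∑ i, ((z j : Ω → ℝ) ω - (z i : Ω → ℝ) ω) ^ 2 * (ζ j * ζ i) ∂μ := by
        rw [integral_finset_sum _ fun j _ => integrable_finset_sum _ fun i _ => hint j i]
        exact Finset.sum_congr rfl fun j _ =>
          (integral_finset_sum _ fun i _ => hint j i).symm
    _ = ∫ ω, -2 * (∑ k, ζ k * (z k : Ω → ℝ) ω) ^ 2 ∂μ := by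
        refine integral_congr_ae (ae_of_all _ fun ω => ?_)
        exact alg_identity (fun k => (z k : Ω → ℝ) ω) ζ hζ
    _ = -2 * ∫ ω, (∑ k, ζ k * (z k : Ω → ℝ) ω) ^ 2 ∂μ := by
        rw [MeasureTheory.integral_const_mul]

lemma lpDist_symm (f g : Ω →ₘ[μ] ℝ) : lpDist p μ f g = lpDist p μ g f := by
  unfold lpDist
  rw [show f - g = -(g - f) by abel]
  rw [eLpNorm_congr_ae (AEEqFun.coeFn_neg (g - f))]
  rw [eLpNorm_neg]

lemma lpDist_self (f : Ω →ₘ[μ] ℝ) : lpDist p μ f f = 0 := by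
  unfold lpDist
  rw [sub_self]
  rw [eLpNorm_congr_ae (AEEqFun.coeFn_zero (β := ℝ) (α := Ω) (μ := μ))]
  simp

lemma lpDist_pos (hp : 0 < p) {f g : Ω →ₘ[μ] ℝ} (hne : f ≠ g)
    (hfL : MemLp (⇑f) (ENNReal.ofReal p) μ) (hgL : MemLp (⇑g) (ENNReal.ofReal p) μ) :
    0 < lpDist p μ f g := by
  have hP0 : (ENNReal.ofReal p) ≠ 0 := by
    simp [ENNReal.ofReal_eq_zero, not_le, hp]
  have hsubae : ⇑(f - g) =ᵐ[μ] fun ω => f ω - g ω := AEEqFun.coeFn_sub f g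
  have hfin : eLpNorm (⇑(f - g)) (ENNReal.ofReal p) μ ≠ ∞ :=
    (MemLp.ae_eq hsubae.symm (hfL.sub hgL)).2.ne
  have hne0 : eLpNorm (⇑(f - g)) (ENNReal.ofReal p) μ ≠ 0 := by
    intro h0
    have := (eLpNorm_eq_zero_iff (f - g).aestronglyMeasurable hP0).1 h0
    have hfg : f - g = 0 :=
      AEEqFun.ext (this.trans (AEEqFun.coeFn_zero).symm)
    exact hne (sub_eq_zero.1 hfg)
  exact ENNReal.toReal_pos hne0 hfin

/-- Coercion of a finite linear combination of a.e.-classes. -/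
lemma coeFn_lin_comb {ι : Type*} (s : Finset ι) (c : ι → ℝ) (F : ι → Ω →ₘ[μ] ℝ) :
    ⇑(∑ i ∈ s, c i • F i) =ᵐ[μ] fun ω => ∑ i ∈ s, c i * (F i : Ω → ℝ) ω := by
  classical
  induction s using Finset.induction_on with
  | empty => simp only [Finset.sum_empty]; exact (AEEqFun.coeFn_zero (β := ℝ) (α := Ω) (μ := μ))
  | insert _ _ hnotmem ih =>
    rename_i a s'
    rw [Finset.sum_insert hnotmem]
    refine (AEEqFun.coeFn_add _ _).trans ?_
    filter_upwards [ih, AEEqFun.coeFn_smul (c a) (F a)] with ω h1 h2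
    simp only [Pi.add_apply, h2, Pi.smul_apply, smul_eq_mul, h1]
    rw [Finset.sum_insert hnotmem]

end TwoValuedLp

/-- If a two-valued subset `B` of `L_p(Ω, μ)` is affinely dependent (as a
subset of the real vector space `L_p(Ω, μ)`), then the generalized roundness of `B` with the
metric inherited from `L_p(Ω, μ)` equals `p`: `B` has `p`-negative type but does not have
`q`-negative type for any `q > p`. -/
theorem twoValued_affineDependent_generalizedRoundness {Ω : Type*} [MeasurableSpace Ω]
    (μ : Measure Ω) (p : ℝ) (hp : 0 < p) (B : Set (Ω →ₘ[μ] ℝ)) (hB : TwoValued B)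
    (hBLp : ∀ f ∈ B, MemLp (⇑f) (ENNReal.ofReal p) μ)
    (hdep : ¬ AffineIndependent ℝ ((↑) : B → (Ω →ₘ[μ] ℝ))) :
    HasNegativeType (lpDist p μ) p B ∧ ∀ q : ℝ, p < q → ¬ HasNegativeType (lpDist p μ) q B := by
  constructor
  · -- p-negative type
    intro n hn z hinj hmem ζ hζ
    rw [form_eq hp z (fun k => hB.2 _ (hmem k)) (fun k => hBLp _ (hmem k)) ζ hζ]
    have h1 : 0 ≤ ∫ ω, (∑ k, ζ k * (z k : Ω → ℝ) ω) ^ 2 ∂μ :=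
      integral_nonneg fun ω => sq_nonneg _
    linarith
  · -- no q-negative type for q > p
    intro q hq hNTq
    have hq0 : 0 < q := hp.trans hq
    rw [affineIndependent_iff] at hdep
    push_neg at hdep
    obtain ⟨s, w, hw0, hwcomb, i₀, hi₀s, hwi₀⟩ := hdep
    set n := s.card with hndef
    have hn2 : 2 ≤ n := by
      by_contra h
      push_neg at h
      have hcard : s.card ≤ 1 := by omega
      have huniq := Finset.card_le_one.1 hcard
      have hs : s = {i₀} := Finset.eq_singleton_iff_unique_mem.2
        ⟨hi₀s, fun x hx => huniq x hx i₀ hi₀s⟩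
      rw [hs, Finset.sum_singleton] at hw0
      exact hwi₀ hw0
    set e := s.equivFin with hedef
    set z : Fin n → (Ω →ₘ[μ] ℝ) := fun k => ((e.symm k : B) : Ω →ₘ[μ] ℝ) with hzdef
    set ζ : Fin n → ℝ := fun k => w (e.symm k : B) with hζdef
    have hinj : Function.Injective z := by
      intro k1 k2 h
      apply e.symm.injective
      apply Subtype.val_injective
      exact Subtype.val_injective h
    have hmemz : ∀ k, z k ∈ B := fun k => ((e.symm k : {x // x ∈ s}) : B).2
    have hζsum : ∑ k, ζ k = 0 := by
      have h1 : ∑ k, ζ k = ∑ x : {x // x ∈ s}, w (x : B) := by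
        exact Equiv.sum_comp e.symm fun x => w (x : B)
      rw [h1, Finset.sum_coe_sort s (fun i => w i), hw0]
    have hcomb' : ∑ k, ζ k • z k = 0 := by
      have h1 : ∑ k, ζ k • z k = ∑ x : {x // x ∈ s}, w (x : B) • ((x : B) : Ω →ₘ[μ] ℝ) := by
        exact Equiv.sum_comp e.symm fun x => w (x : B) • ((x : B) : Ω →ₘ[μ] ℝ)
      rw [h1, Finset.sum_coe_sort s (fun i => w i • (i : Ω →ₘ[μ] ℝ)), hwcomb]
    have hζne : ζ ≠ 0 := by
      intro h0
      apply hwi₀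
      have := congrFun h0 (e ⟨i₀, hi₀s⟩)
      simpa [hζdef] using this
    -- the configuration has vanishing p-form
    have hae : (fun ω => ∑ k, ζ k * (z k : Ω → ℝ) ω) =ᵐ[μ] 0 := by
      have h1 := coeFn_lin_comb (Finset.univ : Finset (Fin n)) ζ z
      rw [hcomb'] at h1
      exact h1.symm.trans (AEEqFun.coeFn_zero)
    have hzero : ∑ j, ∑ i, lpDist p μ (z j) (z i) ^ p * (ζ j * ζ i) = 0 := by
      rw [form_eq hp z (fun k => hB.2 _ (hmemz k)) (fun k => hBLp _ (hmemz k)) ζ hζsum]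
      have h2 : (fun ω => (∑ k, ζ k * (z k : Ω → ℝ) ω) ^ 2) =ᵐ[μ] 0 := by
        filter_upwards [hae] with ω h
        simp only [Pi.zero_apply] at h ⊢
        rw [h]; norm_num
      rw [integral_congr_ae h2]
      simp
    -- the q-power kernel T
    set T : Fin n → Fin n → ℝ := fun j i => lpDist p μ (z j) (z i) ^ q with hTdef
    have hTsym : ∀ j i, T j i = T i j := fun j i => by
      simp only [hTdef]; rw [lpDist_symm]
    have hTdiag : ∀ j, T j j = 0 := fun j => by
      simp only [hTdef]; rw [lpDist_self, Real.zero_rpow hq0.ne']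
    have hTpos : ∀ j i, j ≠ i → 0 < T j i := by
      intro j i hji
      have hne : z j ≠ z i := fun h => hji (hinj h)
      exact Real.rpow_pos_of_pos (lpDist_pos hp hne (hBLp _ (hmemz j)) (hBLp _ (hmemz i))) q
    have hTNT : ∀ ζ' : Fin n → ℝ, ∑ k, ζ' k = 0 →
        ∑ j, ∑ i, T j i * (ζ' j * ζ' i) ≤ 0 :=
      fun ζ' hζ' => hNTq n hn2 z hinj hmemz ζ' hζ'
    have ha0 : 0 < p / q := div_pos hp hq0
    have ha1 : p / q < 1 := (div_lt_one hq0).2 hq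
    have hkey := key_strict T hTsym hTdiag hTpos hTNT ha0 ha1 ζ hζsum hζne
    have hpow : ∀ j i, (T j i) ^ (p / q) = lpDist p μ (z j) (z i) ^ p := by
      intro j i
      have hd : 0 ≤ lpDist p μ (z j) (z i) := ENNReal.toReal_nonneg
      simp only [hTdef]
      rw [← Real.rpow_mul hd]
      congr 1
      field_simp
    simp only [hpow] at hkey
    rw [hzero] at hkey
    exact lt_irrefl 0 hkey
end
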